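/- For every integer n ≥ 1 and every n-chain x, the iterates s^[k](x) are n-chains for all k ≥ 1 if and only if x ∈ 𝒩 and n ≥ 4; moreover, in that case s^[k](x) ∈ 𝒩 for all k ≥ 1. -/

import Mathlib

/-- The counting operator: `countOp n x j` is the number of indices `i` with `x i = j`. -/
def countOp (n : ℕ) (x : Fin n → ℕ) : Fin n → ℕ :=
  fun j => (Finset.univ.filter fun i => x i = (j : ℕ)).card

/-- `𝒩`: the set of `n`-chains that are neither constant nor injective. -/
def NSet (n : ℕ) : Set (Fin n → ℕ) :=
  {x | (∀ i, x i < n) ∧ (¬ ∃ c, ∀ i, x i = c) ∧ ¬ Function.Injective x}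

lemma sum_countOp (n : ℕ) (x : Fin n → ℕ) (hx : ∀ i, x i < n) :
    ∑ j : Fin n, countOp n x j = n := by
  classical
  have h := Finset.card_eq_sum_card_fiberwise
    (f := fun i => (⟨x i, hx i⟩ : Fin n)) (s := Finset.univ) (t := Finset.univ)
    (fun i _ => Finset.mem_univ _)
  have h2 : ∀ j : Fin n, countOp n x j =
      (Finset.univ.filter fun i => (⟨x i, hx i⟩ : Fin n) = j).card := by
    intro j
    unfold countOp
    congr 1
    apply Finset.filter_congr
    intro i _
    simp [Fin.ext_iff]
  calc ∑ j : Fin n, countOp n x j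
      = ∑ j : Fin n, (Finset.univ.filter fun i => (⟨x i, hx i⟩ : Fin n) = j).card :=
        Finset.sum_congr rfl (fun j _ => h2 j)
    _ = (Finset.univ : Finset (Fin n)).card := h.symm
    _ = n := by simp

lemma countOp_le (n : ℕ) (x : Fin n → ℕ) (j : Fin n) : countOp n x j ≤ n := by
  unfold countOp
  calc (Finset.univ.filter fun i => x i = (j : ℕ)).card ≤ (Finset.univ : Finset (Fin n)).card :=
        Finset.card_le_card (Finset.filter_subset _ _)
    _ = n := by simp

lemma countOp_lt_of_not_const (n : ℕ) (x : Fin n → ℕ)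
    (h : ¬ ∃ c, ∀ i, x i = c) (j : Fin n) : countOp n x j < n := by
  rcases lt_or_eq_of_le (countOp_le n x j) with h1 | h1
  · exact h1
  · exfalso
    apply h
    refine ⟨(j : ℕ), fun i => ?_⟩
    have : (Finset.univ.filter fun i => x i = (j : ℕ)) = Finset.univ := by
      apply Finset.eq_univ_of_card
      simpa using (show (Finset.univ.filter fun i => x i = (j : ℕ)).card = n from h1)
    have := Finset.eq_univ_iff_forall.mp this i
    simpa using this

lemma countOp_const_eq (n : ℕ) (x : Fin n → ℕ) (c : ℕ) (hc : c < n)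
    (h : ∀ i, x i = c) : countOp n x ⟨c, hc⟩ = n := by
  unfold countOp
  have : (Finset.univ.filter fun i => x i = c) = Finset.univ := by
    apply Finset.eq_univ_iff_forall.mpr
    intro i
    simp [h i]
  simp [this]

lemma not_const_countOp (n : ℕ) (hn : 1 ≤ n) (x : Fin n → ℕ) (hx : ∀ i, x i < n)
    (hninj : ¬ Function.Injective x) : ¬ ∃ c, ∀ j, countOp n x j = c := by
  rintro ⟨c, hc⟩
  have hsum := sum_countOp n x hx
  have : ∑ j : Fin n, countOp n x j = n * c := by
    rw [Finset.sum_congr rfl (fun j _ => hc j)]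
    simp [Finset.card_univ, mul_comm]
  have hc1 : c = 1 := by
    rw [this] at hsum
    rcases Nat.eq_zero_or_pos c with h | h
    · subst h
      simp at hsum
      omega
    · nlinarith
  -- now every fiber has card 1, so x is injective
  apply hninj
  intro a b hab
  have hja := hc ⟨x a, hx a⟩
  rw [hc1] at hja
  have ha : a ∈ Finset.univ.filter fun i => x i = x a := by simp
  have hb : b ∈ Finset.univ.filter fun i => x i = x a := by simp [hab]
  have hcard : (Finset.univ.filter fun i => x i = x a).card = 1 := hja
  obtain ⟨u, hu⟩ := Finset.card_eq_one.mp hcard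
  rw [hu] at ha hb
  simp at ha hb
  rw [ha, hb]

lemma tri : ∀ (m : ℕ) (S : Finset ℕ), S.card = m → ∑ i ∈ Finset.range m, i ≤ ∑ a ∈ S, a := by
  intro m
  induction m with
  | zero => simp
  | succ m ih =>
    intro S hS
    have hne : S.Nonempty := Finset.card_pos.mp (by omega)
    set M := S.max' hne with hMdef
    have hM : M ∈ S := S.max'_mem hne
    have hsub : S ⊆ Finset.range (M + 1) := fun a ha =>
      Finset.mem_range.mpr (Nat.lt_succ_of_le (S.le_max' a ha))
    have hcard : m + 1 ≤ M + 1 := by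
      have := Finset.card_le_card hsub
      rw [hS, Finset.card_range] at this
      exact this
    have herase : (S.erase M).card = m := by
      rw [Finset.card_erase_of_mem hM, hS]
      omega
    have hih := ih (S.erase M) herase
    have hsplit : M + ∑ a ∈ S.erase M, a = ∑ a ∈ S, a :=
      Finset.add_sum_erase S (fun a => a) hM
    rw [Finset.sum_range_succ]
    omega

lemma not_inj_of_sum (n : ℕ) (hn4 : 4 ≤ n) (y : Fin n → ℕ)
    (hsum : ∑ j : Fin n, y j = n) : ¬ Function.Injective y := by
  intro hinj
  set S := Finset.univ.image y with hSdef
  have hcard : S.card = n := by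
    rw [hSdef, Finset.card_image_of_injective _ hinj]
    simp
  have hsumS : ∑ a ∈ S, a = n := by
    rw [hSdef, Finset.sum_image (fun i _ j _ h => hinj h)]
    exact hsum
  have htri := tri n S hcard
  have hg : (∑ i ∈ Finset.range n, i) * 2 = n * (n - 1) := Finset.sum_range_id_mul_two n
  have h3 : n * 3 ≤ n * (n - 1) := Nat.mul_le_mul_left n (by omega)
  omega

lemma countOp_of_inj (n : ℕ) (y : Fin n → ℕ) (hy : ∀ i, y i < n)
    (hinj : Function.Injective y) (j : Fin n) : countOp n y j = 1 := by
  classical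
  set g : Fin n → Fin n := fun i => ⟨y i, hy i⟩ with hg
  have hginj : Function.Injective g := by
    intro a b hab
    apply hinj
    have := congrArg Fin.val hab
    simpa [hg] using this
  have hgsurj : Function.Surjective g := Finite.surjective_of_injective hginj
  obtain ⟨i0, hi0⟩ := hgsurj j
  unfold countOp
  rw [Finset.card_eq_one]
  refine ⟨i0, ?_⟩
  ext i
  simp only [Finset.mem_filter, Finset.mem_univ, true_and, Finset.mem_singleton]
  constructor
  · intro hi
    apply hginj
    rw [hi0]
    exact Fin.ext hi
  · intro hi
    rw [hi]
    have := congrArg Fin.val hi0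
    simpa [hg] using this

lemma step_NSet (n : ℕ) (hn4 : 4 ≤ n) (x : Fin n → ℕ) (hN : x ∈ NSet n) :
    countOp n x ∈ NSet n := by
  obtain ⟨hx, hnc, hninj⟩ := hN
  refine ⟨countOp_lt_of_not_const n x hnc, ?_, ?_⟩
  · exact not_const_countOp n (by omega) x hx hninj
  · exact not_inj_of_sum n hn4 _ (sum_countOp n x hx)

lemma key_NSet (n : ℕ) (hn4 : 4 ≤ n) (x : Fin n → ℕ) (hN : x ∈ NSet n) :
    ∀ k, 1 ≤ k → (countOp n)^[k] x ∈ NSet n := by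
  intro k hk
  induction k with
  | zero => omega
  | succ m ih =>
    rw [Function.iterate_succ_apply']
    rcases Nat.eq_zero_or_pos m with hm | hm
    · subst hm
      simpa using step_NSet n hn4 x hN
    · exact step_NSet n hn4 _ (ih hm)

theorem iterates_isChain_iff (n : ℕ) (hn : 1 ≤ n) (x : Fin n → ℕ) (hx : ∀ i, x i < n) :
    ((∀ k, 1 ≤ k → ∀ j, (countOp n)^[k] x j < n) ↔ (x ∈ NSet n ∧ 4 ≤ n)) ∧
    (x ∈ NSet n → 4 ≤ n → ∀ k, 1 ≤ k → (countOp n)^[k] x ∈ NSet n) := by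
  constructor
  · constructor
    · intro H
      have hH1 : ∀ j, countOp n x j < n := by
        intro j
        have := H 1 le_rfl j
        simpa using this
      have hH2 : ∀ j, countOp n (countOp n x) j < n := by
        intro j
        have := H 2 (by norm_num) j
        simpa [Function.iterate_succ_apply'] using this
      have hH3 : ∀ j, countOp n (countOp n (countOp n x)) j < n := by
        intro j
        have := H 3 (by norm_num) j
        have h3 : (countOp n)^[3] x = countOp n (countOp n (countOp n x)) := by
          rw [show (3 : ℕ) = 2 + 1 from rfl, Function.iterate_succ_apply',
            show (2 : ℕ) = 1 + 1 from rfl, Function.iterate_succ_apply',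
            Function.iterate_one]
        rwa [h3] at this
      -- x is not constant
      have hnc : ¬ ∃ c, ∀ i, x i = c := by
        rintro ⟨c, hc⟩
        have i0 : Fin n := ⟨0, hn⟩
        have hcn : c < n := hc i0 ▸ hx i0
        have := countOp_const_eq n x c hcn hc
        have := hH1 ⟨c, hcn⟩
        omega
      -- x is not injective
      have hninj : ¬ Function.Injective x := by
        intro hinj
        have hn2 : 2 ≤ n := by
          by_contra h
          have hn1 : n = 1 := by omega
          apply hnc
          subst hn1
          exact ⟨x ⟨0, by omega⟩, fun i => by
            have : i = ⟨0, by omega⟩ := by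
              apply Fin.ext
              omega
            rw [this]⟩
        have h1 := countOp_of_inj n x hx hinj
        have := countOp_const_eq n (countOp n x) 1 (by omega) h1
        have := hH2 ⟨1, by omega⟩
        omega
      refine ⟨⟨hx, hnc, hninj⟩, ?_⟩
      -- n ≥ 4
      by_contra h4
      have hn3 : n = 3 := by
        rcases (show n = 1 ∨ n = 2 ∨ n = 3 by omega) with h | h | h
        · exfalso
          apply hnc
          subst h
          exact ⟨x ⟨0, by omega⟩, fun i => by
            have : i = ⟨0, by omega⟩ := by apply Fin.ext; omega
            rw [this]⟩
        · exfalso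
          apply hninj
          subst h
          intro a b hab
          apply Fin.ext
          by_contra hne
          apply hnc
          refine ⟨x a, fun i => ?_⟩
          have : i = a ∨ i = b := by
            rcases (show (i : ℕ) = (a : ℕ) ∨ (i : ℕ) = (b : ℕ) by omega) with h' | h'
            · exact Or.inl (Fin.ext h')
            · exact Or.inr (Fin.ext h')
          rcases this with h' | h'
          · rw [h']
          · rw [h', hab]
        · exact h
      subst hn3
      set y := countOp 3 x with hy
      have hylt : ∀ j, y j < 3 := hH1
      have hsum : ∑ j : Fin 3, y j = 3 := sum_countOp 3 x hx
      have hsum3 : y 0 + y 1 + y 2 = 3 := by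
        have h3 := Fin.sum_univ_three y
        omega
      have hync := not_const_countOp 3 (by norm_num) x hx hninj
      have hne3 : ¬ (y 0 = y 1 ∧ y 0 = y 2) := by
        rintro ⟨h01, h02⟩
        apply hync
        refine ⟨y 0, fun j => ?_⟩
        fin_cases j
        · rfl
        · exact h01.symm
        · exact h02.symm
      have ha := hylt 0
      have hb := hylt 1
      have hc := hylt 2
      have d01 : y 0 ≠ y 1 := by omega
      have d02 : y 0 ≠ y 2 := by omega
      have d12 : y 1 ≠ y 2 := by omega
      have hyinj : Function.Injective y := by
        intro i j hij
        fin_cases i <;> fin_cases j <;>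
          first
            | rfl
            | (exact absurd hij d01)
            | (exact absurd hij d02)
            | (exact absurd hij d12)
            | (exact absurd hij.symm d01)
            | (exact absurd hij.symm d02)
            | (exact absurd hij.symm d12)
      have h1 := countOp_of_inj 3 y hylt hyinj
      have hbig := countOp_const_eq 3 (countOp 3 y) 1 (by norm_num) h1
      have := hH3 ⟨1, by norm_num⟩
      omega
    · rintro ⟨hN, h4⟩ k hk j
      exact (key_NSet n h4 x hN k hk).1 j
  · intro hN h4
    exact key_NSet n h4 x hN
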